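/- Let S be a type endowed with the discrete topology, W ∈ ℝ and λ* ∈ [0,1). Let w : List S → ℝ satisfy |w l| ≤ W for every list l, and let lam : List S → ℝ satisfy 0 ≤ lam l ≤ λ* for every list l. For π : ℕ → S and r ∈ ℕ, write pref π r for the list [π 0, π 1, …, π (r−1)] of the first r values of π. Define F : (ℕ → S) → ℝ by F π = ∑'_{r ∈ ℕ} (∏_{ℓ ∈ Finset.range r} lam (pref π (ℓ+1))) * w (pref π (r+1)). Then for every π the family r ↦ (∏_{ℓ ∈ Finset.range r} lam (pref π (ℓ+1))) * w (pref π (r+1)) is summable, and F is continuous with respect to the product topology on ℕ → S. -/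

import Mathlib

theorem stmt17 (S : Type*) [TopologicalSpace S] [DiscreteTopology S]
    (W lamStar : ℝ) (hlamStar0 : 0 ≤ lamStar) (hlamStar1 : lamStar < 1)
    (w : List S → ℝ) (hw : ∀ l, |w l| ≤ W)
    (lam : List S → ℝ) (hlam : ∀ l, 0 ≤ lam l ∧ lam l ≤ lamStar) :
    (∀ π : ℕ → S, Summable (fun r : ℕ =>
      (∏ ℓ ∈ Finset.range r, lam (List.ofFn (fun i : Fin (ℓ + 1) => π i))) *
        w (List.ofFn (fun i : Fin (r + 1) => π i)))) ∧
    Continuous (fun π : ℕ → S => ∑' r : ℕ,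
      (∏ ℓ ∈ Finset.range r, lam (List.ofFn (fun i : Fin (ℓ + 1) => π i))) *
        w (List.ofFn (fun i : Fin (r + 1) => π i))) := by
  have hW : 0 ≤ W := le_trans (abs_nonneg _) (hw [])
  set f : ℕ → (ℕ → S) → ℝ := fun r π =>
    (∏ ℓ ∈ Finset.range r, lam (List.ofFn (fun i : Fin (ℓ + 1) => π i))) *
      w (List.ofFn (fun i : Fin (r + 1) => π i)) with hf
  have hbound : ∀ (r : ℕ) (π : ℕ → S), ‖f r π‖ ≤ W * lamStar ^ r := by
    intro r π
    have hprod0 : 0 ≤ ∏ ℓ ∈ Finset.range r, lam (List.ofFn (fun i : Fin (ℓ + 1) => π i)) :=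
      Finset.prod_nonneg fun i _ => (hlam _).1
    have hprod : (∏ ℓ ∈ Finset.range r, lam (List.ofFn (fun i : Fin (ℓ + 1) => π i)))
        ≤ lamStar ^ r := by
      calc (∏ ℓ ∈ Finset.range r, lam (List.ofFn (fun i : Fin (ℓ + 1) => π i)))
          ≤ ∏ _ℓ ∈ Finset.range r, lamStar :=
            Finset.prod_le_prod (fun i _ => (hlam _).1) (fun i _ => (hlam _).2)
        _ = lamStar ^ r := by simp
    have := abs_mul (∏ ℓ ∈ Finset.range r, lam (List.ofFn (fun i : Fin (ℓ + 1) => π i)))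
      (w (List.ofFn (fun i : Fin (r + 1) => π i)))
    rw [Real.norm_eq_abs, hf]
    simp only []
    rw [abs_mul, abs_of_nonneg hprod0]
    calc (∏ ℓ ∈ Finset.range r, lam (List.ofFn (fun i : Fin (ℓ + 1) => π i))) *
          |w (List.ofFn (fun i : Fin (r + 1) => π i))|
        ≤ lamStar ^ r * W :=
          mul_le_mul hprod (hw _) (abs_nonneg _) (pow_nonneg hlamStar0 r)
      _ = W * lamStar ^ r := mul_comm _ _
  have hu : Summable (fun r : ℕ => W * lamStar ^ r) :=
    (summable_geometric_of_lt_one hlamStar0 hlamStar1).mul_left W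
  constructor
  · intro π
    exact Summable.of_norm_bounded hu (fun r => hbound r π)
  · have hcont : ∀ r : ℕ, Continuous (f r) := by
      intro r
      have h1 : Continuous (fun π : ℕ → S => (fun i : Fin (r + 1) => π i)) :=
        continuous_pi fun i => continuous_apply (i : ℕ)
      have h2 : Continuous (fun v : Fin (r + 1) → S =>
          (∏ ℓ ∈ Finset.range r, lam (List.ofFn (fun i : Fin (ℓ + 1) => v ⟨min i r, by omega⟩))) *
            w (List.ofFn (fun i : Fin (r + 1) => v i))) := continuous_of_discreteTopology
      have : f r = (fun v : Fin (r + 1) → S =>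
          (∏ ℓ ∈ Finset.range r, lam (List.ofFn (fun i : Fin (ℓ + 1) => v ⟨min i r, by omega⟩))) *
            w (List.ofFn (fun i : Fin (r + 1) => v i))) ∘
          (fun π : ℕ → S => (fun i : Fin (r + 1) => π i)) := by
        funext π
        simp only [Function.comp, hf]
        congr 1
        refine Finset.prod_congr rfl fun ℓ hℓ => ?_
        have hℓr : ℓ < r := Finset.mem_range.mp hℓ
        refine congrArg lam (congrArg List.ofFn (funext fun i => ?_))
        have : min (i : ℕ) r = (i : ℕ) := min_eq_left (by omega)
        simp [this]
      rw [this]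
      exact h2.comp h1
    exact continuous_tsum hcont hu (fun n x => hbound n x)
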